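/- arXiv:1604.01727 — 11 statements merged into one kernel-verified Lean document; each statement's English description precedes it below -/
import Mathlib

section
/- Let v : [0,∞) → X be continuously differentiable with v(0) = v₀ and v′(τ) = −g(v(τ))·(v(τ) − p) for all τ ≥ 0. Then for every τ ≥ 0 one has the separation-of-variables formula v(τ) = θ(τ)·v₀ + (1 − θ(τ))·p, where θ(τ) = exp(−∫₀^τ g(v(σ)) dσ). -/
open Set Filter Topology MeasureTheory intervalIntegral

/-- The solution of the abstract determining form `dv/dτ = -g(v)(v - p)` in a Banach
space `X` satisfies the separation-of-variables formula
`v(τ) = θ(τ)·v₀ + (1 - θ(τ))·p`, where `θ(τ) = exp(-∫₀^τ g(v(σ)) dσ)`. -/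
theorem separation_of_variables
    {X : Type*} [NormedAddCommGroup X] [NormedSpace ℝ X] [CompleteSpace X]
    (g : X → ℝ) (hg_cont : Continuous g) (hg_nonneg : ∀ x, 0 ≤ g x)
    (p v₀ : X) (v : ℝ → X) (hv0 : v 0 = v₀)
    (hv' : ∀ τ ∈ Set.Ici (0:ℝ),
      HasDerivWithinAt v ((-(g (v τ))) • (v τ - p)) (Set.Ici 0) τ) :
    ∀ τ ∈ Set.Ici (0:ℝ),
      v τ = Real.exp (-(∫ σ in (0:ℝ)..τ, g (v σ))) • v₀
            + (1 - Real.exp (-(∫ σ in (0:ℝ)..τ, g (v σ)))) • p := by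
  have hvcont : ContinuousOn v (Set.Ici 0) := fun x hx =>
    (hv' x hx).continuousWithinAt
  have hgv : ContinuousOn (fun σ => g (v σ)) (Set.Ici 0) :=
    hg_cont.comp_continuousOn hvcont
  set G : ℝ → ℝ := fun τ => ∫ σ in (0:ℝ)..τ, g (v σ) with hG
  have hInt : ∀ x : ℝ, 0 ≤ x → IntervalIntegrable (fun σ => g (v σ)) volume 0 x := by
    intro x hx
    apply ContinuousOn.intervalIntegrable
    apply hgv.mono
    rw [Set.uIcc_of_le hx]
    exact Set.Icc_subset_Ici_self
  have hGderiv : ∀ x : ℝ, 0 ≤ x →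
      HasDerivWithinAt G (g (v x)) (Set.Ici x) x := by
    intro x hx
    refine intervalIntegral.integral_hasDerivWithinAt_right (hInt x hx)
      ⟨Set.Ioi x, self_mem_nhdsWithin,
        ((hgv.mono (fun y hy => le_trans hx (le_of_lt hy))).aestronglyMeasurable
          measurableSet_Ioi)⟩ ?_
    exact (hgv x hx).mono (fun y hy => le_trans hx (le_of_lt hy))
  set w : ℝ → X := fun x => Real.exp (G x) • (v x - p) with hw
  have hwderiv : ∀ x : ℝ, 0 ≤ x → HasDerivWithinAt w 0 (Set.Ici x) x := by
    intro x hx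
    have h1 : HasDerivWithinAt (fun y => Real.exp (G y))
        (Real.exp (G x) * g (v x)) (Set.Ici x) x := (hGderiv x hx).exp
    have h2 : HasDerivWithinAt (fun y => v y - p) ((-(g (v x))) • (v x - p))
        (Set.Ici x) x :=
      ((hv' x hx).mono (Set.Ici_subset_Ici.2 hx)).sub_const p
    have h3 := h1.smul h2
    convert h3 using 1
    · rfl
    rw [smul_smul]
    module
  have hwconst : ∀ τ : ℝ, 0 ≤ τ → w τ = w 0 := by
    intro τ hτ
    have hGc : ContinuousOn G (Set.Icc 0 τ) := by
      have := intervalIntegral.continuousOn_primitive_interval'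
        (μ := volume) (f := fun σ => g (v σ)) (b₁ := (0:ℝ)) (b₂ := τ)
        (hInt τ hτ) Set.left_mem_uIcc
      rwa [Set.uIcc_of_le hτ] at this
    have hcont : ContinuousOn w (Set.Icc 0 τ) := by
      apply ContinuousOn.smul
      · exact Real.continuous_exp.comp_continuousOn hGc
      · exact (hvcont.mono (Set.Icc_subset_Ici_self)).sub continuousOn_const
    exact constant_of_has_deriv_right_zero hcont
      (fun x hx => hwderiv x hx.1) τ (Set.mem_Icc.2 ⟨hτ, le_rfl⟩)
  intro τ hτ
  have h0 : w 0 = v₀ - p := by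
    simp [hw, hG, hv0]
  have hwt : Real.exp (G τ) • (v τ - p) = v₀ - p := by
    have := hwconst τ hτ
    rw [h0] at this
    simpa [hw] using this
  have hexp : Real.exp (-(G τ)) • (Real.exp (G τ) • (v τ - p)) = Real.exp (-(G τ)) • (v₀ - p) := by
    rw [hwt]
  rw [smul_smul, ← Real.exp_add, neg_add_cancel, Real.exp_zero, one_smul] at hexp
  have : v τ = Real.exp (-(G τ)) • (v₀ - p) + p := by
    rw [← hexp]; abel
  rw [this]
  rw [smul_sub, sub_smul, one_smul]
  abel
end

section
/- Let v : [0,∞) → X be continuously differentiable with v(0) = v₀ and v′(τ) = −g(v(τ))·(v(τ) − p) for all τ ≥ 0, and set θ(τ) = exp(−∫₀^τ g(v(σ)) dσ). Then θ is differentiable on [0,∞), θ(0) = 1, θ(τ) ∈ (0,1] for all τ ≥ 0, and θ satisfies the one-dimensional characteristic parametric determining form dθ/dτ = −θ(τ)·g(θ(τ)·v₀ + (1 − θ(τ))·p). -/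
open Set Filter Topology MeasureTheory intervalIntegral

/-- For a solution of the abstract determining form `dv/dτ = -g(v)(v - p)`, the
characteristic determining parameter `θ(τ) = exp(-∫₀^τ g(v(σ)) dσ)` is differentiable
on `[0,∞)`, satisfies `θ(0) = 1`, `θ(τ) ∈ (0,1]`, and solves the one-dimensional
characteristic parametric determining form `dθ/dτ = -θ·g(θ·v₀ + (1-θ)·p)`. -/
theorem characteristic_parametric_determining_form
    {X : Type*} [NormedAddCommGroup X] [NormedSpace ℝ X] [CompleteSpace X]
    (g : X → ℝ) (hg_cont : Continuous g) (hg_nonneg : ∀ x, 0 ≤ g x)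
    (p v₀ : X) (v : ℝ → X) (hv0 : v 0 = v₀)
    (hv' : ∀ τ ∈ Set.Ici (0:ℝ),
      HasDerivWithinAt v ((-(g (v τ))) • (v τ - p)) (Set.Ici 0) τ)
    (θ : ℝ → ℝ)
    (hθ : ∀ τ, θ τ = Real.exp (-(∫ σ in (0:ℝ)..τ, g (v σ)))) :
    θ 0 = 1 ∧
    (∀ τ ∈ Set.Ici (0:ℝ), θ τ ∈ Set.Ioc (0:ℝ) 1) ∧
    (∀ τ ∈ Set.Ici (0:ℝ),
      HasDerivWithinAt θ (-(θ τ * g (θ τ • v₀ + (1 - θ τ) • p))) (Set.Ici 0) τ) := by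
  set I : ℝ → ℝ := fun t => ∫ σ in (0:ℝ)..t, g (v σ) with hI
  have hvc : ContinuousOn v (Set.Ici 0) := fun τ hτ => (hv' τ hτ).continuousWithinAt
  have hgvc : ContinuousOn (fun σ => g (v σ)) (Set.Ici 0) := hg_cont.comp_continuousOn hvc
  have hint : ∀ τ : ℝ, 0 ≤ τ → IntervalIntegrable (fun σ => g (v σ)) volume 0 τ := by
    intro τ hτ
    apply ContinuousOn.intervalIntegrable
    apply hgvc.mono
    rw [Set.uIcc_of_le hτ]
    exact fun x hx => hx.1
  -- derivative of I
  have hI' : ∀ τ ∈ Set.Ici (0:ℝ), HasDerivWithinAt I (g (v τ)) (Set.Ici 0) τ := by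
    intro τ hτ
    rcases eq_or_lt_of_le (show (0:ℝ) ≤ τ from hτ) with h0 | h0
    · subst h0
      refine intervalIntegral.integral_hasDerivWithinAt_right (hint 0 le_rfl)
        ⟨Set.Ici 0, mem_of_superset self_mem_nhdsWithin Set.Ioi_subset_Ici_self,
          hgvc.aestronglyMeasurable measurableSet_Ici⟩ ?_
      exact (hgvc 0 Set.self_mem_Ici).mono Set.Ioi_subset_Ici_self
    · have : HasDerivAt I (g (v τ)) τ := by
        apply intervalIntegral.integral_hasDerivAt_right (hint τ hτ)
        · exact ⟨Set.Ici 0, Ici_mem_nhds h0,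
            hgvc.aestronglyMeasurable measurableSet_Ici⟩
        · exact (hgvc τ hτ).continuousAt (Ici_mem_nhds h0)
      exact this.hasDerivWithinAt
  have hI0 : I 0 = 0 := intervalIntegral.integral_same
  -- derivative of θ
  have hθfun : θ = fun t => Real.exp (-(I t)) := funext hθ
  have hθ' : ∀ τ ∈ Set.Ici (0:ℝ),
      HasDerivWithinAt θ (θ τ * (-(g (v τ)))) (Set.Ici 0) τ := by
    intro τ hτ
    rw [hθfun]
    simpa using ((hI' τ hτ).neg).exp
  -- z is constant
  set z : ℝ → X := fun t => Real.exp (I t) • (v t - p) with hz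
  have hz' : ∀ τ ∈ Set.Ici (0:ℝ), HasDerivWithinAt z 0 (Set.Ici 0) τ := by
    intro τ hτ
    have h1 : HasDerivWithinAt (fun t => Real.exp (I t)) (Real.exp (I τ) * g (v τ))
        (Set.Ici 0) τ := (hI' τ hτ).exp
    have h2 : HasDerivWithinAt (fun t => v t - p) ((-(g (v τ))) • (v τ - p))
        (Set.Ici 0) τ := (hv' τ hτ).sub_const p
    have := h1.smul h2
    convert this using 1
    · rfl
    rw [smul_smul, ← add_smul]
    ring_nf
    simp
  have hzconst : ∀ τ ∈ Set.Ici (0:ℝ), z τ = z 0 := by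
    intro τ hτ
    apply (convex_Ici (0:ℝ)).is_const_of_fderivWithin_eq_zero
      (fun x hx => (hz' x hx).differentiableWithinAt) _ hτ Set.self_mem_Ici
    intro x hx
    have h0 : HasFDerivWithinAt z (0 : ℝ →L[ℝ] X) (Set.Ici 0) x := by
      have h := (hz' x hx).hasFDerivWithinAt
      rw [ContinuousLinearMap.toSpanSingleton_zero] at h
      exact h
    exact h0.fderivWithin ((uniqueDiffOn_Ici 0) x hx)
  have hz0 : z 0 = v₀ - p := by simp [hz, hI0, hv0]
  -- identify v τ
  have hvθ : ∀ τ ∈ Set.Ici (0:ℝ), θ τ • v₀ + (1 - θ τ) • p = v τ := by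
    intro τ hτ
    have h1 : Real.exp (I τ) • (v τ - p) = v₀ - p := (hzconst τ hτ).trans hz0
    have h2 : v τ - p = θ τ • (v₀ - p) := by
      rw [hθ τ, Real.exp_neg, ← h1, smul_smul]
      rw [inv_mul_cancel₀ (Real.exp_ne_zero _), one_smul]
    have : v τ = θ τ • (v₀ - p) + p := by rw [← h2]; abel
    rw [this, smul_sub, sub_smul, one_smul]
    abel
  refine ⟨by simp [hθ 0, hI0], ?_, ?_⟩
  · intro τ hτ
    constructor
    · rw [hθ τ]; exact Real.exp_pos _
    · rw [hθ τ]
      apply Real.exp_le_one_iff.mpr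
      simp only [neg_nonpos]
      exact intervalIntegral.integral_nonneg hτ fun x hx => hg_nonneg _
  · intro τ hτ
    rw [hvθ τ hτ]
    have := hθ' τ hτ
    convert this using 1
    ring
end

section
/- Let v : [0,∞) → X be continuously differentiable with v(0) = v₀ and v′(τ) = −g(v(τ))·(v(τ) − p) for all τ ≥ 0, and set θ(τ) = exp(−∫₀^τ g(v(σ)) dσ) with limit θ̄ = lim_{τ→∞} θ(τ). Then θ̄ = 0 if and only if ∫₀^∞ g(v(σ)) dσ = ∞, and in that case v(τ) → p in X as τ → ∞. -/
open Set Filter Topology MeasureTheory intervalIntegral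

/-- For a solution of the abstract determining form `dv/dτ = -g(v)(v - p)` with
characteristic determining parameter `θ(τ) = exp(-∫₀^τ g(v(σ)) dσ)` having limit `θ̄`:
`θ̄ = 0` if and only if `∫₀^∞ g(v(σ)) dσ = ∞`, and in that case `v(τ) → p` as `τ → ∞`. -/
theorem theta_bar_zero_iff
    {X : Type*} [NormedAddCommGroup X] [NormedSpace ℝ X] [CompleteSpace X]
    (g : X → ℝ) (hg_cont : Continuous g) (hg_nonneg : ∀ x, 0 ≤ g x)
    (p v₀ : X) (v : ℝ → X) (hv0 : v 0 = v₀)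
    (hv' : ∀ τ ∈ Set.Ici (0:ℝ),
      HasDerivWithinAt v ((-(g (v τ))) • (v τ - p)) (Set.Ici 0) τ)
    (θ : ℝ → ℝ)
    (hθ : ∀ τ, θ τ = Real.exp (-(∫ σ in (0:ℝ)..τ, g (v σ))))
    (θbar : ℝ) (hlim : Filter.Tendsto θ Filter.atTop (nhds θbar)) :
    (θbar = 0 ↔
      Filter.Tendsto (fun τ => ∫ σ in (0:ℝ)..τ, g (v σ)) Filter.atTop Filter.atTop) ∧
    (θbar = 0 → Filter.Tendsto v Filter.atTop (nhds p)) := by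
  set I : ℝ → ℝ := fun τ => ∫ σ in (0:ℝ)..τ, g (v σ) with hI
  have hvc : ContinuousOn v (Ici 0) := fun τ hτ => (hv' τ hτ).continuousWithinAt
  have hgc : ContinuousOn (fun σ => g (v σ)) (Ici 0) := hg_cont.comp_continuousOn hvc
  have hint : ∀ τ : ℝ, 0 ≤ τ → IntervalIntegrable (fun σ => g (v σ)) volume 0 τ := by
    intro τ hτ
    refine (hgc.mono ?_).intervalIntegrable
    rw [uIcc_of_le hτ]
    exact Icc_subset_Ici_self
  -- derivative of I within Ici x for x ≥ 0
  have hI' : ∀ x : ℝ, 0 ≤ x → HasDerivWithinAt I (g (v x)) (Ici x) x := by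
    intro x hx
    refine intervalIntegral.integral_hasDerivWithinAt_right (hint x hx)
      ⟨Ici 0, ?_, hgc.aestronglyMeasurable measurableSet_Ici⟩
      ((hgc x hx).mono (Ioi_subset_Ici hx))
    exact mem_of_superset self_mem_nhdsWithin (Ioi_subset_Ici hx)
  -- iff part
  have hiff : θbar = 0 ↔ Tendsto I atTop atTop := by
    constructor
    · intro h
      have hpos : ∀ τ, 0 < θ τ := fun τ => by rw [hθ]; exact Real.exp_pos _
      have h1 : Tendsto θ atTop (𝓝[>] (0:ℝ)) := by
        rw [h] at hlim
        exact tendsto_nhdsWithin_of_tendsto_nhds_of_eventually_within _ hlim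
          (Eventually.of_forall hpos)
      have h2 : Tendsto (fun τ => Real.log (θ τ)) atTop atBot :=
        Real.tendsto_log_nhdsGT_zero.comp h1
      have h3 : (fun τ => Real.log (θ τ)) = fun τ => -(I τ) := by
        funext τ; rw [hθ, Real.log_exp]
      rw [h3] at h2
      simpa [Function.comp_def] using tendsto_neg_atBot_atTop.comp h2
    · intro h
      have : Tendsto θ atTop (𝓝 0) := by
        have := Real.tendsto_exp_atBot.comp (tendsto_neg_atTop_atBot.comp h)
        refine this.congr fun τ => ?_
        simp [hθ, Function.comp, hI]
      exact tendsto_nhds_unique hlim this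
  refine ⟨hiff, fun h0 => ?_⟩
  -- key identity : v τ - p = θ τ • (v₀ - p) for τ ≥ 0
  have key : ∀ τ : ℝ, 0 ≤ τ → v τ - p = θ τ • (v₀ - p) := by
    intro τ hτ
    set F : ℝ → X := fun s => Real.exp (I s) • (v s - p) with hF
    have hFderiv : ∀ x ∈ Ico 0 τ, HasDerivWithinAt F 0 (Ici x) x := by
      intro x hx
      have hx0 : (0:ℝ) ≤ x := hx.1
      have hIx : HasDerivWithinAt (fun s => Real.exp (I s)) (Real.exp (I x) * g (v x))
          (Ici x) x := (hI' x hx0).exp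
      have hvx : HasDerivWithinAt (fun s => v s - p) ((-(g (v x))) • (v x - p)) (Ici x) x :=
        ((hv' x hx0).mono (Ici_subset_Ici.2 hx0)).sub_const p
      have := hIx.smul hvx
      convert this using 1
      · rfl
      module
    have hFcont : ContinuousOn F (Icc 0 τ) := by
      have hIcont : ContinuousOn I (Icc 0 τ) := by
        have h1 : IntegrableOn (fun σ => g (v σ)) (uIcc 0 τ) volume := by
          rw [uIcc_of_le hτ]
          exact (hgc.mono Icc_subset_Ici_self).integrableOn_Icc
        have := intervalIntegral.continuousOn_primitive_interval h1
        rwa [uIcc_of_le hτ] at this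
      exact (Real.continuous_exp.comp_continuousOn hIcont).smul
        ((hvc.mono Icc_subset_Ici_self).sub continuousOn_const)
    have := constant_of_has_deriv_right_zero hFcont hFderiv τ (by
      exact ⟨hτ, le_refl τ⟩)
    have hF0 : F 0 = v₀ - p := by
      simp [hF, hI, hv0]
    have hFτ : F τ = Real.exp (I τ) • (v τ - p) := rfl
    have h1 : Real.exp (I τ) • (v τ - p) = v₀ - p := by rw [← hFτ, ← hF0]; exact this
    have h2 : (v τ - p) = Real.exp (-(I τ)) • (v₀ - p) := by
      rw [← h1, smul_smul, ← Real.exp_add]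
      simp
    rw [h2, hθ]
  -- conclude
  have : Tendsto (fun τ => θ τ • (v₀ - p)) atTop (𝓝 ((0:ℝ) • (v₀ - p))) := by
    rw [← h0]
    exact hlim.smul_const _
  rw [zero_smul] at this
  have h4 : Tendsto (fun τ => v τ - p) atTop (𝓝 0) := by
    refine this.congr' ?_
    filter_upwards [eventually_ge_atTop (0:ℝ)] with τ hτ
    exact (key τ hτ).symm
  have := h4.add_const p
  simpa using this
end

section
/- Let v : [0,∞) → X be continuously differentiable with v(0) = v₀ and v′(τ) = −g(v(τ))·(v(τ) − p) for all τ ≥ 0, and set θ(τ) = exp(−∫₀^τ g(v(σ)) dσ) with limit θ̄ = lim_{τ→∞} θ(τ). Then θ̄ ∈ (0,1] if and only if ∫₀^∞ g(v(σ)) dσ < ∞; moreover, in that case v(τ) converges in X, as τ → ∞, to v̄ = θ̄·v₀ + (1 − θ̄)·p, and g(v̄) = 0. -/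
open Set Filter Topology MeasureTheory intervalIntegral

/-- For a solution of the abstract determining form `dv/dτ = -g(v)(v - p)` with
characteristic determining parameter `θ(τ) = exp(-∫₀^τ g(v(σ)) dσ)` having limit `θ̄`:
`θ̄ ∈ (0,1]` if and only if `∫₀^∞ g(v(σ)) dσ < ∞`; moreover, in that case
`v(τ) → v̄ = θ̄·v₀ + (1-θ̄)·p` and `g(v̄) = 0`. -/
theorem theta_bar_positive_iff
    {X : Type*} [NormedAddCommGroup X] [NormedSpace ℝ X] [CompleteSpace X]
    (g : X → ℝ) (hg_cont : Continuous g) (hg_nonneg : ∀ x, 0 ≤ g x)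
    (p v₀ : X) (v : ℝ → X) (hv0 : v 0 = v₀)
    (hv' : ∀ τ ∈ Set.Ici (0:ℝ),
      HasDerivWithinAt v ((-(g (v τ))) • (v τ - p)) (Set.Ici 0) τ)
    (θ : ℝ → ℝ)
    (hθ : ∀ τ, θ τ = Real.exp (-(∫ σ in (0:ℝ)..τ, g (v σ))))
    (θbar : ℝ) (hlim : Filter.Tendsto θ Filter.atTop (nhds θbar)) :
    (θbar ∈ Set.Ioc (0:ℝ) 1 ↔
      MeasureTheory.IntegrableOn (fun σ => g (v σ)) (Set.Ici 0)) ∧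
    (θbar ∈ Set.Ioc (0:ℝ) 1 →
      Filter.Tendsto v Filter.atTop (nhds (θbar • v₀ + (1 - θbar) • p)) ∧
      g (θbar • v₀ + (1 - θbar) • p) = 0) := by
  -- continuity of `v` and of `g ∘ v` on `Ici 0`
  have hvc : ContinuousOn v (Ici 0) := fun τ hτ => (hv' τ hτ).continuousWithinAt
  have hgc : ContinuousOn (fun σ => g (v σ)) (Ici 0) := hg_cont.comp_continuousOn hvc
  -- interval integrability
  have hInt : ∀ a b : ℝ, 0 ≤ a → 0 ≤ b →
      IntervalIntegrable (fun σ => g (v σ)) volume a b := by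
    intro a b ha hb
    apply (hgc.mono ?_).intervalIntegrable
    intro x hx
    rcases le_total a b with h | h
    · rw [uIcc_of_le h] at hx; exact le_trans ha hx.1
    · rw [uIcc_of_ge h] at hx; exact le_trans hb hx.1
  set G : ℝ → ℝ := fun τ => ∫ σ in (0:ℝ)..τ, g (v σ) with hGdef
  have hG0 : G 0 = 0 := intervalIntegral.integral_same
  -- G is nonneg and monotone on Ici 0
  have hGadd : ∀ a b : ℝ, 0 ≤ a → 0 ≤ b → G a + (∫ σ in a..b, g (v σ)) = G b := by
    intro a b ha hb
    exact intervalIntegral.integral_add_adjacent_intervals (hInt 0 a le_rfl ha) (hInt a b ha hb)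
  have hGmono : ∀ a b : ℝ, 0 ≤ a → a ≤ b → G a ≤ G b := by
    intro a b ha hab
    have hb : (0:ℝ) ≤ b := le_trans ha hab
    have hnn : (0:ℝ) ≤ ∫ σ in a..b, g (v σ) :=
      intervalIntegral.integral_nonneg hab (fun x _ => hg_nonneg _)
    linarith [hGadd a b ha hb]
  have hGnonneg : ∀ τ : ℝ, 0 ≤ τ → 0 ≤ G τ := by
    intro τ hτ; have := hGmono 0 τ le_rfl hτ; rw [hG0] at this; exact this
  -- θ values
  have hθG : ∀ τ, θ τ = Real.exp (-(G τ)) := hθ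
  have hθpos : ∀ τ, 0 < θ τ := by intro τ; rw [hθG]; exact Real.exp_pos _
  have hθle1 : ∀ τ : ℝ, 0 ≤ τ → θ τ ≤ 1 := by
    intro τ hτ; rw [hθG]
    exact Real.exp_le_one_iff.2 (neg_nonpos.2 (hGnonneg τ hτ))
  have hθanti : ∀ a b : ℝ, 0 ≤ a → a ≤ b → θ b ≤ θ a := by
    intro a b ha hab; rw [hθG, hθG]
    exact Real.exp_le_exp.2 (neg_le_neg (hGmono a b ha hab))
  -- θbar ≤ θ τ for all τ ≥ 0
  have hθbar_le : ∀ τ : ℝ, 0 ≤ τ → θbar ≤ θ τ := by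
    intro τ hτ
    refine le_of_tendsto hlim ?_
    filter_upwards [eventually_ge_atTop τ] with b hb
    exact hθanti τ b hτ hb
  have hθbar_le1 : θbar ≤ 1 := by
    refine le_of_tendsto hlim ?_
    filter_upwards [eventually_ge_atTop (0:ℝ)] with b hb
    exact hθle1 b hb
  -- the explicit formula for v
  have hGderiv : ∀ τ ∈ Ici (0:ℝ), HasDerivWithinAt G (g (v τ)) (Ici 0) τ := by
    intro τ hτ
    have hmeasset : AEStronglyMeasurable (fun σ => g (v σ)) (volume.restrict (Ici 0)) :=
      hgc.aestronglyMeasurable measurableSet_Ici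
    rcases eq_or_lt_of_le (show (0:ℝ) ≤ τ from hτ) with h | h
    · cases h
      exact intervalIntegral.integral_hasDerivWithinAt_right (t := Ioi (0:ℝ))
        (hInt 0 0 le_rfl le_rfl)
        ⟨Ici 0, mem_of_superset self_mem_nhdsWithin Ioi_subset_Ici_self, hmeasset⟩
        ((hgc 0 Set.self_mem_Ici).mono Ioi_subset_Ici_self)
    · have hnb : Ici (0:ℝ) ∈ 𝓝 τ := Ici_mem_nhds h
      have hm : StronglyMeasurableAtFilter (fun σ => g (v σ)) (𝓝 τ) :=
        ⟨Ici 0, hnb, hmeasset⟩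
      exact (intervalIntegral.integral_hasDerivAt_right (hInt 0 τ le_rfl hτ) hm
        ((hgc τ hτ).continuousAt hnb)).hasDerivWithinAt
  set u : ℝ → X := fun τ => Real.exp (G τ) • (v τ - p) with hudef
  have huderiv : ∀ τ ∈ Ici (0:ℝ), HasDerivWithinAt u 0 (Ici 0) τ := by
    intro τ hτ
    have h1 : HasDerivWithinAt (fun τ => Real.exp (G τ))
        (Real.exp (G τ) * g (v τ)) (Ici 0) τ := (hGderiv τ hτ).exp
    have h2 : HasDerivWithinAt (fun τ => v τ - p)
        ((-(g (v τ))) • (v τ - p)) (Ici 0) τ := (hv' τ hτ).sub_const p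
    have := h1.smul h2
    convert this using 1
    · rfl
    module
  have huconst : ∀ τ ∈ Ici (0:ℝ), u τ = v₀ - p := by
    intro τ hτ
    have h := (convex_Ici (0:ℝ)).norm_image_sub_le_of_norm_hasDerivWithin_le
      (C := 0) huderiv (fun x _ => by simp) (self_mem_Ici) hτ
    have : u τ = u 0 := by
      rw [← sub_eq_zero]
      simpa using h
    rw [this, hudef]; simp [hG0, hv0]
  have hkey : ∀ τ : ℝ, 0 ≤ τ → v τ = θ τ • (v₀ - p) + p := by
    intro τ hτ
    have h := huconst τ hτ
    have : v τ - p = Real.exp (-(G τ)) • (v₀ - p) := by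
      rw [← h, hudef]
      simp [smul_smul, ← Real.exp_add]
    rw [hθG]
    rw [← this]; abel
  -- the limit point
  have hvbar : θbar • (v₀ - p) + p = θbar • v₀ + (1 - θbar) • p := by
    rw [smul_sub, sub_smul, one_smul]; abel
  -- forward: θbar ∈ Ioc 0 1 → integrable
  have hfwd : 0 < θbar → IntegrableOn (fun σ => g (v σ)) (Ici 0) := by
    intro hpos
    have hGbound : ∀ τ : ℝ, 0 ≤ τ → G τ ≤ -Real.log θbar := by
      intro τ hτ
      have h := hθbar_le τ hτ
      rw [hθG] at h
      have := (Real.log_le_iff_le_exp hpos).2 h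
      linarith
    rw [integrableOn_Ici_iff_integrableOn_Ioi]
    refine MeasureTheory.integrableOn_Ioi_of_intervalIntegral_norm_bounded
      (-Real.log θbar) 0 (fun i : ℝ => ?_) (tendsto_id (α := ℝ)) ?_
    · rcases le_or_gt i 0 with h | h
      · simp [Set.Ioc_eq_empty_of_le h]
      · exact ((hInt 0 i le_rfl h.le).1).mono_set (fun x hx => hx)
    · filter_upwards [eventually_ge_atTop (0:ℝ)] with i hi
      have : (∫ x in (0:ℝ)..i, ‖g (v x)‖) = G i := by
        apply intervalIntegral.integral_congr
        intro x _
        exact Real.norm_of_nonneg (hg_nonneg _)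
      simp only [id_eq]
      rw [this]
      exact hGbound i hi
  -- backward: integrable → θbar ∈ Ioc 0 1
  have hbwd : IntegrableOn (fun σ => g (v σ)) (Ici 0) → 0 < θbar := by
    intro hint
    have hint' : IntegrableOn (fun σ => g (v σ)) (Ioi 0) :=
      hint.mono_set Ioi_subset_Ici_self
    have hGlim : Tendsto G atTop (𝓝 (∫ x in Ioi 0, g (v x))) :=
      MeasureTheory.intervalIntegral_tendsto_integral_Ioi 0 hint' tendsto_id
    have hθlim : Tendsto θ atTop (𝓝 (Real.exp (-(∫ x in Ioi 0, g (v x))))) := by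
      have := (Real.continuous_exp.tendsto _).comp hGlim.neg
      refine this.congr fun τ => (hθG τ).symm
    have := tendsto_nhds_unique hlim hθlim
    rw [this]; exact Real.exp_pos _
  constructor
  · constructor
    · intro h; exact hfwd h.1
    · intro h; exact ⟨hbwd h, hθbar_le1⟩
  · rintro ⟨hpos, -⟩
    have hvlim : Tendsto v atTop (𝓝 (θbar • v₀ + (1 - θbar) • p)) := by
      rw [← hvbar]
      have h1 : Tendsto (fun τ => θ τ • (v₀ - p) + p) atTop (𝓝 (θbar • (v₀ - p) + p)) :=
        Tendsto.add_const p (hlim.smul_const (v₀ - p))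
      refine h1.congr' ?_
      filter_upwards [eventually_ge_atTop (0:ℝ)] with τ hτ
      exact (hkey τ hτ).symm
    refine ⟨hvlim, ?_⟩
    set vbar := θbar • v₀ + (1 - θbar) • p with hvbardef
    by_contra hne
    have hc : 0 < g vbar := lt_of_le_of_ne (hg_nonneg _) (Ne.symm hne)
    -- g (v τ) → g vbar
    have hgv : Tendsto (fun τ => g (v τ)) atTop (𝓝 (g vbar)) :=
      (hg_cont.tendsto _).comp hvlim
    obtain ⟨a, ha⟩ := eventually_atTop.1 (hgv.eventually (eventually_ge_nhds (half_lt_self hc)))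
    set a' := max a 0 with ha'def
    have ha'0 : (0:ℝ) ≤ a' := le_max_right _ _
    have hgea : ∀ b : ℝ, a' ≤ b → g vbar / 2 ≤ g (v b) := fun b hb =>
      ha b (le_trans (le_max_left _ _) hb)
    -- G grows at least linearly, contradicting the bound from θbar > 0
    have hGbound : ∀ τ : ℝ, 0 ≤ τ → G τ ≤ -Real.log θbar := by
      intro τ hτ
      have h := hθbar_le τ hτ
      rw [hθG] at h
      have := (Real.log_le_iff_le_exp hpos).2 h
      linarith
    have hgrow : ∀ b : ℝ, a' ≤ b → G a' + g vbar / 2 * (b - a') ≤ G b := by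
      intro b hb
      have hb0 : (0:ℝ) ≤ b := le_trans ha'0 hb
      have h1 : (∫ σ in a'..b, g vbar / 2) ≤ ∫ σ in a'..b, g (v σ) := by
        apply intervalIntegral.integral_mono_on hb (intervalIntegrable_const)
          (hInt a' b ha'0 hb0)
        intro x hx; exact hgea x hx.1
      rw [intervalIntegral.integral_const] at h1
      have h2 := hGadd a' b ha'0 hb0
      have : g vbar / 2 * (b - a') ≤ ∫ σ in a'..b, g (v σ) := by
        simpa [mul_comm, smul_eq_mul] using h1
      linarith
    -- choose b large
    set b := a' + (2 * (-Real.log θbar - G a' + 1)) / g vbar with hbdef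
    have hble : a' ≤ b := by
      have h1 : G a' ≤ -Real.log θbar := hGbound a' ha'0
      have h2 : 0 ≤ (2 * (-Real.log θbar - G a' + 1)) / g vbar :=
        div_nonneg (by linarith) hc.le
      rw [hbdef]
      linarith
    have h3 := hgrow b hble
    have h4 := hGbound b (le_trans ha'0 hble)
    have h5 : g vbar / 2 * (b - a') = -Real.log θbar - G a' + 1 := by
      rw [hbdef]
      field_simp
      ring
    linarith
end

section
/- Let v : [0,∞) → X be continuously differentiable with v(0) = v₀ and v′(τ) = −g(v(τ))·(v(τ) − p) for all τ ≥ 0, set θ(τ) = exp(−∫₀^τ g(v(σ)) dσ) with limit θ̄ = lim_{τ→∞} θ(τ), and define Φ : [0,1] → ℝ by Φ(θ) = −θ·g(θ·v₀ + (1 − θ)·p). Then Φ(θ̄) = 0; that is, the limit of the characteristic determining parameter is always a characteristic determining value (a zero of the vector field of the characteristic parametric determining form). -/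
open Set Filter Topology MeasureTheory intervalIntegral

/-- For a solution of the abstract determining form `dv/dτ = -g(v)(v - p)` with
characteristic determining parameter `θ(τ) = exp(-∫₀^τ g(v(σ)) dσ)` having limit `θ̄`,
and `Φ(θ) = -θ·g(θ·v₀ + (1-θ)·p)` the vector field of the characteristic parametric
determining form, one has `Φ(θ̄) = 0`: the limit is a characteristic determining value. -/
theorem limit_is_characteristic_determining_value
    {X : Type*} [NormedAddCommGroup X] [NormedSpace ℝ X] [CompleteSpace X]
    (g : X → ℝ) (hg_cont : Continuous g) (hg_nonneg : ∀ x, 0 ≤ g x)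
    (p v₀ : X) (v : ℝ → X) (hv0 : v 0 = v₀)
    (hv' : ∀ τ ∈ Set.Ici (0:ℝ),
      HasDerivWithinAt v ((-(g (v τ))) • (v τ - p)) (Set.Ici 0) τ)
    (θ : ℝ → ℝ)
    (hθ : ∀ τ, θ τ = Real.exp (-(∫ σ in (0:ℝ)..τ, g (v σ))))
    (θbar : ℝ) (hlim : Filter.Tendsto θ Filter.atTop (nhds θbar))
    (Φ : ℝ → ℝ)
    (hΦ : ∀ t, Φ t = -(t * g (t • v₀ + (1 - t) • p))) :
    Φ θbar = 0 := by
  -- continuity facts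
  have hvcont : ContinuousOn v (Ici 0) := fun τ hτ => (hv' τ hτ).continuousWithinAt
  have hgv : ContinuousOn (fun σ => g (v σ)) (Ici 0) := hg_cont.comp_continuousOn hvcont
  set G : ℝ → ℝ := fun τ => ∫ σ in (0:ℝ)..τ, g (v σ) with hGdef
  have hint : ∀ ⦃a b : ℝ⦄, 0 ≤ a → a ≤ b →
      IntervalIntegrable (fun σ => g (v σ)) volume a b := by
    intro a b ha hab
    apply ContinuousOn.intervalIntegrable
    apply hgv.mono
    rw [uIcc_of_le hab]
    exact fun x hx => le_trans ha hx.1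
  -- derivative of G from the right
  have hG' : ∀ τ, 0 ≤ τ → HasDerivWithinAt G (g (v τ)) (Ici τ) τ := by
    intro τ hτ
    refine intervalIntegral.integral_hasDerivWithinAt_right (hint le_rfl hτ) ?_ ?_
    · exact ⟨Ici 0, mem_of_superset self_mem_nhdsWithin (fun x hx => le_trans hτ hx.le),
        hgv.aestronglyMeasurable measurableSet_Ici⟩
    · exact (hgv τ hτ).mono (fun x hx => le_trans hτ hx.le)
  -- w = exp(G) • (v - p) has zero right derivative
  set w : ℝ → X := fun τ => Real.exp (G τ) • (v τ - p) with hwdef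
  have hw' : ∀ τ, 0 ≤ τ → HasDerivWithinAt w 0 (Ici τ) τ := by
    intro τ hτ
    have hE : HasDerivWithinAt (fun τ => Real.exp (G τ)) (Real.exp (G τ) * g (v τ)) (Ici τ) τ :=
      (Real.hasDerivAt_exp (G τ)).comp_hasDerivWithinAt τ (hG' τ hτ)
    have hvp : HasDerivWithinAt (fun τ => v τ - p) ((-(g (v τ))) • (v τ - p)) (Ici τ) τ :=
      ((hv' τ hτ).mono (Ici_subset_Ici.2 hτ)).sub_const p
    have := hE.smul hvp
    have h0 : Real.exp (G τ) • ((-(g (v τ))) • (v τ - p))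
        + (Real.exp (G τ) * g (v τ)) • (v τ - p) = 0 := by
      rw [smul_smul, ← add_smul]
      have : Real.exp (G τ) * (-(g (v τ))) + Real.exp (G τ) * g (v τ) = 0 := by ring
      rw [this, zero_smul]
    rwa [h0] at this
  -- w is constant on [0, ∞)
  have hwconst : ∀ τ, 0 ≤ τ → w τ = v₀ - p := by
    intro b hb
    have hGcont : ContinuousOn G (Icc 0 b) := by
      have hI : IntegrableOn (fun σ => g (v σ)) (Icc 0 b) volume :=
        (hgv.mono Icc_subset_Ici_self).integrableOn_compact isCompact_Icc
      refine (continuousOn_primitive hI).congr ?_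
      intro x hx
      simp [hGdef, intervalIntegral.integral_of_le hx.1]
    have hwcont : ContinuousOn w (Icc 0 b) :=
      (Real.continuous_exp.comp_continuousOn hGcont).smul
        ((hvcont.mono Icc_subset_Ici_self).sub continuousOn_const)
    have := constant_of_has_deriv_right_zero hwcont (fun x hx => hw' x hx.1) b
      (right_mem_Icc.2 hb)
    rw [this]
    have hG0 : G 0 = 0 := intervalIntegral.integral_same
    simp [hwdef, hG0, hv0]
  -- solution formula
  have hform : ∀ τ, 0 ≤ τ → v τ = θ τ • v₀ + (1 - θ τ) • p := by
    intro τ hτ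
    have hw := hwconst τ hτ
    have h1 : v τ - p = θ τ • (v₀ - p) := by
      rw [hθ, Real.exp_neg, ← hw, hwdef, smul_smul,
        inv_mul_cancel₀ (Real.exp_ne_zero _), one_smul]
    rw [smul_sub] at h1
    have h2 : v τ = θ τ • v₀ - θ τ • p + p := by
      rw [← h1]; abel
    rw [h2, sub_smul, one_smul]; abel
  -- v tends to q
  have hvt : Tendsto v atTop (𝓝 (θbar • v₀ + (1 - θbar) • p)) := by
    have h1 : Tendsto (fun τ => θ τ • v₀ + (1 - θ τ) • p) atTop
        (𝓝 (θbar • v₀ + (1 - θbar) • p)) :=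
      (hlim.smul_const v₀).add ((tendsto_const_nhds.sub hlim).smul_const p)
    exact h1.congr' (eventually_of_mem (Ici_mem_atTop 0) fun τ hτ => (hform τ hτ).symm)
  set q : X := θbar • v₀ + (1 - θbar) • p with hqdef
  have hgt : Tendsto (fun τ => g (v τ)) atTop (𝓝 (g q)) := (hg_cont.tendsto q).comp hvt
  rcases (hg_nonneg q).eq_or_lt with h | h
  · rw [hΦ, ← hqdef, ← h, mul_zero, neg_zero]
  · -- g q > 0 : then θ → 0, so θbar = 0
    set c := g q with hcdef
    have hev : ∀ᶠ σ in atTop, c / 2 ≤ g (v σ) :=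
      hgt.eventually (eventually_ge_nhds (by linarith))
    obtain ⟨T₀, hT₀⟩ := eventually_atTop.1 hev
    set T : ℝ := max T₀ 0 with hTdef
    have hT0 : (0:ℝ) ≤ T := le_max_right _ _
    have hbound : ∀ τ, T ≤ τ → c / 2 * (τ - T) ≤ G τ := by
      intro τ hτ
      have hTτ : (0:ℝ) ≤ τ := le_trans hT0 hτ
      have hsplit : G τ = (∫ σ in (0:ℝ)..T, g (v σ)) + ∫ σ in T..τ, g (v σ) :=
        (intervalIntegral.integral_add_adjacent_intervals (hint le_rfl hT0)
          (hint hT0 hτ)).symm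
      have h1 : (0:ℝ) ≤ ∫ σ in (0:ℝ)..T, g (v σ) :=
        intervalIntegral.integral_nonneg hT0 (fun σ _ => hg_nonneg _)
      have h2 : c / 2 * (τ - T) ≤ ∫ σ in T..τ, g (v σ) := by
        have := intervalIntegral.integral_mono_on hτ
          (_root_.intervalIntegrable_const (c := c / 2)) (hint hT0 hτ)
          (fun x hx => hT₀ x (le_trans (le_max_left _ _) hx.1))
        rwa [intervalIntegral.integral_const, smul_eq_mul, mul_comm] at this
      rw [hsplit]; linarith
    have hθ0 : Tendsto θ atTop (𝓝 0) := by
      apply squeeze_zero' (Filter.Eventually.of_forall fun τ => by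
        rw [hθ]; exact (Real.exp_pos _).le)
        (g := fun τ => Real.exp (c / 2 * T - c / 2 * τ))
      · filter_upwards [Ici_mem_atTop T] with τ hτ
        rw [hθ]
        apply Real.exp_le_exp.2
        have := hbound τ hτ
        nlinarith
      · have hlin : Tendsto (fun τ : ℝ => c / 2 * T - c / 2 * τ) atTop atBot := by
          have h1 : Tendsto (fun τ : ℝ => c / 2 * τ) atTop atTop :=
            Tendsto.const_mul_atTop (by linarith) tendsto_id
          simpa [sub_eq_add_neg] using
            tendsto_atBot_add_const_left atTop (c / 2 * T) (tendsto_neg_atTop_atBot.comp h1)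
        exact Real.tendsto_exp_atBot.comp hlin
    have : θbar = 0 := tendsto_nhds_unique hlim hθ0
    rw [hΦ, this, zero_mul, neg_zero]
end

section
/- Let h : X → [0,∞) be Lipschitz with constant c and h(p) = 0, and let v : [0,∞) → X be continuously differentiable with v(0) = v₀ and v′(τ) = −h(v(τ))²·(v(τ) − p) for all τ ≥ 0. Then for all τ ≥ 0, ‖v(τ) − p‖ ≥ ‖v₀ − p‖ / (1 + 2c²·‖v₀ − p‖²·τ)^{1/2}; in particular v(τ) converges to p no faster than O(τ^{−1/2}). -/
open Set Filter Topology

/-- If `h : X → [0,∞)` is Lipschitz with constant `c`, `h(p) = 0`, and `v` solves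
`dv/dτ = -h(v)²·(v - p)` with `v(0) = v₀`, then
`‖v(τ) - p‖ ≥ ‖v₀ - p‖ / (1 + 2c²‖v₀ - p‖²τ)^{1/2}` for all `τ ≥ 0`:
convergence to `p` is no faster than `O(τ^{-1/2})`. -/
theorem convergence_to_p_rate_lower_bound
    {X : Type*} [NormedAddCommGroup X] [NormedSpace ℝ X] [CompleteSpace X]
    (p v₀ : X) (c : ℝ) (hc : 0 ≤ c) (h : X → ℝ)
    (hpos : ∀ x, 0 ≤ h x)
    (hlip : ∀ x y : X, |h x - h y| ≤ c * ‖x - y‖)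
    (hp : h p = 0)
    (v : ℝ → X) (hv0 : v 0 = v₀)
    (hv' : ∀ τ ∈ Set.Ici (0:ℝ),
      HasDerivWithinAt v ((-(h (v τ) ^ 2)) • (v τ - p)) (Set.Ici 0) τ) :
    ∀ τ ∈ Set.Ici (0:ℝ),
      ‖v₀ - p‖ / Real.sqrt (1 + 2 * c ^ 2 * ‖v₀ - p‖ ^ 2 * τ) ≤ ‖v τ - p‖ := by
  set n₀ : ℝ := ‖v₀ - p‖ with hn₀
  -- continuity of v on Ici 0
  have hvc : ContinuousOn v (Ici 0) := fun τ hτ => (hv' τ hτ).continuousWithinAt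
  -- continuity of h
  have hhc : Continuous h := by
    have : LipschitzWith ⟨c, hc⟩ h :=
      LipschitzWith.of_dist_le_mul fun x y => by
        rw [Real.dist_eq, dist_eq_norm]; exact hlip x y
    exact this.continuous
  -- the extended coefficient function
  set a : ℝ → ℝ := fun t => (h (v (max t 0))) ^ 2 with ha
  have hac : Continuous a := by
    have h1 : Continuous fun t : ℝ => max t 0 := continuous_id.max continuous_const
    have h2 : Continuous fun t : ℝ => v (max t 0) :=
      hvc.comp_continuous h1 fun t => le_max_right t 0
    exact (hhc.comp h2).pow 2
  have ha_eq : ∀ t ∈ Ici (0:ℝ), a t = (h (v t)) ^ 2 := by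
    intro t ht
    simp only [ha, max_eq_left (mem_Ici.mp ht)]
  have ha_nonneg : ∀ t, 0 ≤ a t := fun t => sq_nonneg _
  -- bound a by c² ‖v t - p‖²
  have ha_bound : ∀ t ∈ Ici (0:ℝ), a t ≤ c ^ 2 * ‖v t - p‖ ^ 2 := by
    intro t ht
    rw [ha_eq t ht]
    have h1 : |h (v t)| ≤ c * ‖v t - p‖ := by
      have := hlip (v t) p
      rwa [hp, sub_zero] at this
    calc (h (v t)) ^ 2 = |h (v t)| ^ 2 := (sq_abs _).symm
      _ ≤ (c * ‖v t - p‖) ^ 2 := by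
          apply pow_le_pow_left₀ (abs_nonneg _) h1
      _ = c ^ 2 * ‖v t - p‖ ^ 2 := by ring
  -- the integrating factor exponent
  set A : ℝ → ℝ := fun t => ∫ s in (0:ℝ)..t, a s with hA
  have hA0 : A 0 = 0 := intervalIntegral.integral_same
  have hA' : ∀ t : ℝ, HasDerivAt A (a t) t := fun t =>
    (hac.integral_hasStrictDerivAt 0 t).hasDerivAt
  have hA_nonneg : ∀ t ∈ Ici (0:ℝ), 0 ≤ A t := by
    intro t ht
    apply intervalIntegral.integral_nonneg (mem_Ici.mp ht)
    intro s _; exact ha_nonneg s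
  -- z = exp(A) • (v - p) is constant on Ici 0
  set z : ℝ → X := fun t => Real.exp (A t) • (v t - p) with hz
  have hz' : ∀ t ∈ Ici (0:ℝ), HasDerivWithinAt z 0 (Ici 0) t := by
    intro t ht
    have h1 : HasDerivWithinAt (fun s => Real.exp (A s)) (Real.exp (A t) * a t) (Ici 0) t :=
      ((hA' t).hasDerivWithinAt).exp
    have h2 : HasDerivWithinAt (fun s => v s - p) ((-(h (v t) ^ 2)) • (v t - p)) (Ici 0) t :=
      (hv' t ht).sub_const p
    have key := h1.smul h2
    convert key using 1
    · rfl
    rw [ha_eq t ht, smul_smul, ← add_smul]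
    have hs : Real.exp (A t) * -(h (v t) ^ 2) + Real.exp (A t) * h (v t) ^ 2 = 0 := by ring
    rw [hs, zero_smul]
  have hz_const : ∀ t ∈ Ici (0:ℝ), z t = v₀ - p := by
    intro t ht
    have key := Convex.norm_image_sub_le_of_norm_hasDerivWithin_le
      (f := z) (f' := fun _ => 0) (C := 0) hz'
      (fun x _ => by simp) (convex_Ici 0) (self_mem_Ici) ht
    rw [zero_mul] at key
    have : z t = z 0 := by
      have := norm_sub_eq_zero_iff.mp (le_antisymm key (norm_nonneg _))
      exact this
    rw [this, hz]
    simp [hA0, hv0]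
  -- norm identity: exp(A t) * ‖v t - p‖ = n₀
  have hnorm : ∀ t ∈ Ici (0:ℝ), Real.exp (A t) * ‖v t - p‖ = n₀ := by
    intro t ht
    have := congrArg norm (hz_const t ht)
    simpa [hz, norm_smul, abs_of_nonneg (Real.exp_nonneg _)] using this
  -- B = exp (2 A) satisfies B τ ≤ 1 + 2 c² n₀² τ
  set B : ℝ → ℝ := fun t => Real.exp (2 * A t) with hB
  have hB' : ∀ t ∈ Ici (0:ℝ),
      HasDerivWithinAt B (Real.exp (2 * A t) * (2 * a t)) (Ici 0) t := by
    intro t _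
    have h1 : HasDerivWithinAt (fun s => 2 * A s) (2 * a t) (Ici 0) t :=
      ((hA' t).hasDerivWithinAt).const_mul 2
    exact h1.exp
  have hB_bound : ∀ t ∈ Ici (0:ℝ),
      ‖Real.exp (2 * A t) * (2 * a t)‖ ≤ 2 * c ^ 2 * n₀ ^ 2 := by
    intro t ht
    have h1 : 0 ≤ Real.exp (2 * A t) * (2 * a t) :=
      mul_nonneg (Real.exp_nonneg _) (mul_nonneg (by norm_num) (ha_nonneg t))
    rw [Real.norm_eq_abs, abs_of_nonneg h1]
    have h2 : a t * Real.exp (2 * A t) ≤ c ^ 2 * n₀ ^ 2 := by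
      calc a t * Real.exp (2 * A t)
          ≤ (c ^ 2 * ‖v t - p‖ ^ 2) * Real.exp (2 * A t) := by
            apply mul_le_mul_of_nonneg_right (ha_bound t ht) (Real.exp_nonneg _)
        _ = c ^ 2 * (Real.exp (A t) * ‖v t - p‖) ^ 2 := by
            rw [two_mul, Real.exp_add]; ring
        _ = c ^ 2 * n₀ ^ 2 := by rw [hnorm t ht]
    calc Real.exp (2 * A t) * (2 * a t) = 2 * (a t * Real.exp (2 * A t)) := by ring
      _ ≤ 2 * (c ^ 2 * n₀ ^ 2) := by linarith
      _ = 2 * c ^ 2 * n₀ ^ 2 := by ring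
  intro τ hτ
  have hτ0 : (0:ℝ) ≤ τ := mem_Ici.mp hτ
  have hBτ : B τ ≤ 1 + 2 * c ^ 2 * n₀ ^ 2 * τ := by
    have key := Convex.norm_image_sub_le_of_norm_hasDerivWithin_le
      (f := B) (f' := fun t => Real.exp (2 * A t) * (2 * a t)) (C := 2 * c ^ 2 * n₀ ^ 2)
      hB' hB_bound (convex_Ici 0) (self_mem_Ici) hτ
    have hB0 : B 0 = 1 := by simp [hB, hA0]
    have h1 : B τ - B 0 ≤ ‖B τ - B 0‖ := le_abs_self _
    rw [hB0] at h1
    have h2 : ‖B τ - B 0‖ ≤ 2 * c ^ 2 * n₀ ^ 2 * τ := by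
      calc ‖B τ - B 0‖ ≤ 2 * c ^ 2 * n₀ ^ 2 * ‖τ - 0‖ := key
        _ = 2 * c ^ 2 * n₀ ^ 2 * τ := by
            rw [sub_zero, Real.norm_eq_abs, abs_of_nonneg hτ0]
    rw [hB0] at h2
    linarith
  -- conclude
  have hexp_pos : 0 < Real.exp (A τ) := Real.exp_pos _
  have hsqrtB : Real.sqrt (Real.exp (2 * A τ)) = Real.exp (A τ) := by
    rw [show (2:ℝ) * A τ = A τ + A τ by ring, Real.exp_add]
    exact Real.sqrt_mul_self (Real.exp_nonneg _)
  have h1 : Real.exp (A τ) ≤ Real.sqrt (1 + 2 * c ^ 2 * n₀ ^ 2 * τ) := by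
    rw [← hsqrtB]
    exact Real.sqrt_le_sqrt hBτ
  have hsq_pos : 0 < Real.sqrt (1 + 2 * c ^ 2 * n₀ ^ 2 * τ) := lt_of_lt_of_le hexp_pos h1
  have hvτ : ‖v τ - p‖ = n₀ / Real.exp (A τ) := by
    field_simp
    rw [mul_comm]
    exact hnorm τ hτ
  rw [hvτ]
  apply div_le_div_of_nonneg_left (by positivity) hexp_pos h1
end

section
/- Let K ≥ 0, θ̄ ∈ [0,1], and let θ : [0,∞) → ℝ be differentiable with θ(0) = 1, θ̄ ≤ θ(τ) ≤ 1 for all τ ≥ 0, and θ′(τ) ≥ −K·(θ(τ) − θ̄)² for all τ ≥ 0. Then θ(τ) − θ̄ ≥ (1 − θ̄)/(1 + Kτ) for all τ ≥ 0. -/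
/-- Scalar comparison lemma: if `θ : [0,∞) → [θ̄,1]` is differentiable with `θ(0) = 1`
and `θ'(τ) ≥ -K·(θ(τ) - θ̄)²` for `K ≥ 0`, then `θ(τ) - θ̄ ≥ (1 - θ̄)/(1 + Kτ)`
for all `τ ≥ 0`. -/
theorem quadratic_differential_inequality
    (K : ℝ) (hK : 0 ≤ K) (θbar : ℝ) (hθbar : θbar ∈ Set.Icc (0:ℝ) 1)
    (θ θ' : ℝ → ℝ)
    (hθ0 : θ 0 = 1)
    (hmem : ∀ τ ∈ Set.Ici (0:ℝ), θbar ≤ θ τ ∧ θ τ ≤ 1)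
    (hderiv : ∀ τ ∈ Set.Ici (0:ℝ), HasDerivWithinAt θ (θ' τ) (Set.Ici 0) τ)
    (hineq : ∀ τ ∈ Set.Ici (0:ℝ), -K * (θ τ - θbar) ^ 2 ≤ θ' τ) :
    ∀ τ ∈ Set.Ici (0:ℝ), (1 - θbar) / (1 + K * τ) ≤ θ τ - θbar := by
  intro τ hτ
  have hτ0 : (0:ℝ) ≤ τ := hτ
  rcases eq_or_lt_of_le hθbar.2 with h1 | h1
  · have h0 : (1 - θbar) = 0 := by rw [← h1]; ring
    rw [h0, zero_div]
    have := (hmem τ hτ).1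
    linarith
  have h1' : 0 < 1 - θbar := by linarith
  have hθτ : 0 ≤ θ τ - θbar := by linarith [(hmem τ hτ).1]
  have key : ∀ ε > (0:ℝ), (1 - θbar) / (1 + (K + ε) * τ) ≤ θ τ - θbar := by
    intro ε hε
    have hKε : 0 < K + ε := by linarith
    have hpos : ∀ t ∈ Set.Icc (0:ℝ) τ, 0 < 1 + (K + ε) * t := by
      intro t ht
      nlinarith [ht.1]
    set B : ℝ → ℝ := fun t => -((1 - θbar) / (1 + (K + ε) * t)) with hB
    set B' : ℝ → ℝ := fun t => (K + ε) * (1 - θbar) / (1 + (K + ε) * t) ^ 2 with hB'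
    have hfc : ContinuousOn (fun t => θbar - θ t) (Set.Icc 0 τ) := by
      apply ContinuousOn.sub continuousOn_const
      intro t ht
      exact ((hderiv t ht.1).continuousWithinAt).mono Set.Icc_subset_Ici_self
    have hBc : ContinuousOn B (Set.Icc 0 τ) := by
      apply ContinuousOn.neg
      apply ContinuousOn.div continuousOn_const
      · exact (continuousOn_const.add (continuousOn_const.mul continuousOn_id))
      · intro t ht; exact (hpos t ht).ne'
    have hBd : ∀ t ∈ Set.Ico (0:ℝ) τ, HasDerivWithinAt B (B' t) (Set.Ici t) t := by
      intro t ht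
      have hne : (1 + (K + ε) * t) ≠ 0 := (hpos t ⟨ht.1, ht.2.le⟩).ne'
      have hd : HasDerivAt (fun s => 1 + (K + ε) * s) (K + ε) t := by
        simpa using ((hasDerivAt_id t).const_mul (K + ε)).const_add 1
      have hd2 := ((hd.inv hne).const_mul (1 - θbar)).neg
      have hBeq : B = fun s => -((1 - θbar) * (1 + (K + ε) * s)⁻¹) := by
        funext s; rw [hB]; ring
      have : HasDerivAt B (B' t) t := by
        rw [hBeq]
        refine hd2.congr_deriv ?_
        rw [hB']
        field_simp
      exact this.hasDerivWithinAt
    have hfd : ∀ t ∈ Set.Ico (0:ℝ) τ,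
        HasDerivWithinAt (fun s => θbar - θ s) (-θ' t) (Set.Ici t) t := by
      intro t ht
      exact (((hderiv t ht.1).mono (Set.Ici_subset_Ici.2 ht.1)).const_sub θbar)
    have ha : θbar - θ 0 ≤ B 0 := by
      rw [hθ0, hB]; simp
    have bound : ∀ t ∈ Set.Ico (0:ℝ) τ, θbar - θ t = B t → -θ' t < B' t := by
      intro t ht hct
      have hp := hpos t ⟨ht.1, ht.2.le⟩
      have hθt : θ t - θbar = (1 - θbar) / (1 + (K + ε) * t) := by
        rw [hB] at hct; linarith
      have h2 : -θ' t ≤ K * (θ t - θbar) ^ 2 := by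
        have := hineq t ht.1
        linarith
      have h3 : K * ((1 - θbar) / (1 + (K + ε) * t)) ^ 2 < B' t := by
        have hBt : B' t = (K + ε) * (1 - θbar) / (1 + (K + ε) * t) ^ 2 := rfl
        have ha1 : K * (1 - θbar) ^ 2 ≤ K * (1 - θbar) := by nlinarith [mul_nonneg (mul_nonneg hK h1'.le) hθbar.1]
        have ha2 : K * (1 - θbar) < (K + ε) * (1 - θbar) := by nlinarith
        rw [hBt, div_pow, ← mul_div_assoc,
          div_lt_div_iff₀ (by positivity) (by positivity)]
        nlinarith [pow_pos hp 2]
      rw [hθt] at h2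
      linarith
    have hfin := image_le_of_deriv_right_lt_deriv_boundary' hfc hfd ha hBc hBd bound
      (Set.right_mem_Icc.2 hτ0)
    rw [hB] at hfin
    simp only at hfin
    linarith
  have hden : 0 < 1 + K * τ := by nlinarith
  rw [div_le_iff₀ hden]
  have hC : 0 ≤ τ * (θ τ - θbar) := mul_nonneg hτ0 hθτ
  apply le_of_forall_pos_le_add
  intro ε' hε'
  set C := τ * (θ τ - θbar) with hCdef
  have h := key (ε' / (C + 1)) (by positivity)
  have hd : 0 < 1 + (K + ε' / (C + 1)) * τ := by positivity
  rw [div_le_iff₀ hd] at h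
  have h2 : (ε' / (C + 1)) * C ≤ ε' := by
    rw [div_mul_eq_mul_div, div_le_iff₀ (by positivity)]
    nlinarith
  have h3 : (θ τ - θbar) * (1 + (K + ε' / (C + 1)) * τ)
      = (θ τ - θbar) * (1 + K * τ) + (ε' / (C + 1)) * C := by rw [hCdef]; ring
  linarith
end

section
/- Let h : X → [0,∞) be Lipschitz with constant c, let v : [0,∞) → X be continuously differentiable with v(0) = v₀ and v′(τ) = −h(v(τ))²·(v(τ) − p) for all τ ≥ 0, set θ(τ) = exp(−∫₀^τ h(v(σ))² dσ), assume the limit θ̄ = lim_{τ→∞} θ(τ) lies in (0,1], set v̄ = θ̄·v₀ + (1 − θ̄)·p, and assume h(v̄) = 0. Then for all τ ≥ 0, ‖v(τ) − v̄‖ ≥ (1 − θ̄)·‖v₀ − p‖ / (1 + c²·‖v₀ − p‖²·τ); in particular v(τ) converges to v̄ no faster than O(τ^{−1}). -/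
open Set Filter Topology MeasureTheory intervalIntegral

set_option maxHeartbeats 1000000 in
/-- If `h : X → [0,∞)` is Lipschitz with constant `c`, `v` solves
`dv/dτ = -h(v)²·(v - p)` with `v(0) = v₀`, the characteristic determining parameter
`θ(τ) = exp(-∫₀^τ h(v(σ))² dσ)` has limit `θ̄ ∈ (0,1]`, and `h(v̄) = 0` at
`v̄ = θ̄·v₀ + (1-θ̄)·p`, then `‖v(τ) - v̄‖ ≥ (1-θ̄)·‖v₀ - p‖/(1 + c²‖v₀ - p‖²τ)`
for all `τ ≥ 0`: convergence to `v̄` is no faster than `O(τ^{-1})`. -/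
theorem convergence_to_vbar_rate_lower_bound
    {X : Type*} [NormedAddCommGroup X] [NormedSpace ℝ X] [CompleteSpace X]
    (p v₀ : X) (c : ℝ) (hc : 0 ≤ c) (h : X → ℝ)
    (hpos : ∀ x, 0 ≤ h x)
    (hlip : ∀ x y : X, |h x - h y| ≤ c * ‖x - y‖)
    (v : ℝ → X) (hv0 : v 0 = v₀)
    (hv' : ∀ τ ∈ Set.Ici (0:ℝ),
      HasDerivWithinAt v ((-(h (v τ) ^ 2)) • (v τ - p)) (Set.Ici 0) τ)
    (θ : ℝ → ℝ)
    (hθ : ∀ τ, θ τ = Real.exp (-(∫ σ in (0:ℝ)..τ, h (v σ) ^ 2)))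
    (θbar : ℝ) (hθbar : θbar ∈ Set.Ioc (0:ℝ) 1)
    (hlim : Filter.Tendsto θ Filter.atTop (nhds θbar))
    (vbar : X) (hvbar : vbar = θbar • v₀ + (1 - θbar) • p)
    (hzero : h vbar = 0) :
    ∀ τ ∈ Set.Ici (0:ℝ),
      (1 - θbar) * ‖v₀ - p‖ / (1 + c ^ 2 * ‖v₀ - p‖ ^ 2 * τ) ≤ ‖v τ - vbar‖ := by
  obtain ⟨hθbpos, hθble1⟩ := hθbar
  intro τ hτ
  have hτ0 : (0:ℝ) ≤ τ := hτ
  set N := ‖v₀ - p‖ with hNdef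
  set K := c ^ 2 * N ^ 2 with hKdef
  set a := 1 - θbar with hadef
  have hN0 : 0 ≤ N := norm_nonneg _
  have hK0 : 0 ≤ K := by positivity
  have ha0 : 0 ≤ a := by rw [hadef]; linarith
  have ha1 : a ≤ 1 := by rw [hadef]; linarith
  -- continuity of h
  have hcont : Continuous h := by
    have hlipW : LipschitzWith (Real.toNNReal c) h := by
      apply LipschitzWith.of_dist_le_mul
      intro x y
      simpa [Real.dist_eq, dist_eq_norm, Real.coe_toNNReal c hc] using hlip x y
    exact hlipW.continuous
  -- continuity of v on [0, ∞) and a global continuous extension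
  have hvc : ContinuousOn v (Ici 0) := fun s hs => (hv' s hs).continuousWithinAt
  set w : ℝ → X := fun σ => v (max σ 0) with hwdef
  have hwc : Continuous w := by
    rw [← continuousOn_univ]
    exact hvc.comp (continuous_id.max continuous_const).continuousOn
      (fun x _ => mem_Ici.mpr (le_max_right _ _))
  have hweq : ∀ s ∈ Ici (0:ℝ), w s = v s := by
    intro s hs; simp [hwdef, max_eq_left (mem_Ici.mp hs)]
  set q : ℝ → ℝ := fun σ => h (w σ) ^ 2 with hqdef
  have hqc : Continuous q := (hcont.comp hwc).pow 2
  have hq0 : ∀ s, 0 ≤ q s := fun s => sq_nonneg _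
  set F : ℝ → ℝ := fun t => ∫ σ in (0:ℝ)..t, q σ with hFdef
  have hF' : ∀ t, HasDerivAt F (q t) t := fun t =>
    (hqc.integral_hasStrictDerivAt 0 t).hasDerivAt
  have hFc : Continuous F := continuous_iff_continuousAt.2 fun t => (hF' t).continuousAt
  have hF0 : F 0 = 0 := intervalIntegral.integral_same
  have hFnn : ∀ s ∈ Ici (0:ℝ), 0 ≤ F s := by
    intro s hs
    exact intervalIntegral.integral_nonneg (mem_Ici.mp hs) (fun x _ => hq0 x)
  set θt : ℝ → ℝ := fun t => Real.exp (-(F t)) with hθtdef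
  have hθtc : Continuous θt := Real.continuous_exp.comp hFc.neg
  have hθt' : ∀ t, HasDerivAt θt (-(q t) * θt t) t := by
    intro t
    simpa [mul_comm] using ((hF' t).neg).exp
  have hθtpos : ∀ t, 0 < θt t := fun t => Real.exp_pos _
  have hθt0 : θt 0 = 1 := by simp [hθtdef, hF0]
  have hθtle1 : ∀ s ∈ Ici (0:ℝ), θt s ≤ 1 := by
    intro s hs
    have h1 : -(F s) ≤ 0 := by linarith [hFnn s hs]
    show Real.exp (-(F s)) ≤ 1
    exact Real.exp_le_one_iff.mpr h1
  -- θ agrees with θt on [0, ∞)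
  have hθeq : ∀ s ∈ Ici (0:ℝ), θ s = θt s := by
    intro s hs
    rw [hθ, hθtdef]
    congr 2
    apply intervalIntegral.integral_congr
    intro x hx
    rw [uIcc_of_le (mem_Ici.mp hs)] at hx
    rw [hqdef]
    simp [hweq x hx.1]
  -- θt is antitone on [0, ∞)
  have hθtanti : ∀ s ∈ Ici (0:ℝ), ∀ t, s ≤ t → θt t ≤ θt s := by
    intro s hs t hst
    have hFst : F s ≤ F t := by
      have hadd : (∫ σ in (0:ℝ)..s, q σ) + ∫ σ in s..t, q σ = ∫ σ in (0:ℝ)..t, q σ :=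
        intervalIntegral.integral_add_adjacent_intervals
          (hqc.intervalIntegrable 0 s) (hqc.intervalIntegrable s t)
      have hnn : 0 ≤ ∫ σ in s..t, q σ :=
        intervalIntegral.integral_nonneg hst (fun x _ => hq0 x)
      rw [hFdef]; simp only []
      linarith [hadd]
    exact Real.exp_le_exp.mpr (by linarith)
  -- θbar ≤ θt s for s ≥ 0
  have hθtbar : ∀ s ∈ Ici (0:ℝ), θbar ≤ θt s := by
    intro s hs
    refine le_of_tendsto hlim ?_
    filter_upwards [Filter.eventually_ge_atTop (max s 0)] with t ht
    rw [hθeq t (le_trans (le_max_right s 0) ht)]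
    exact hθtanti s hs t (le_trans (le_max_left s 0) ht)
  set g : ℝ → ℝ := fun t => θt t - θbar with hgdef
  have hg' : ∀ t, HasDerivAt g (-(q t) * θt t) t := fun t => (hθt' t).sub_const θbar
  have hgc : Continuous g := hθtc.sub continuous_const
  have hg0 : ∀ s ∈ Ici (0:ℝ), 0 ≤ g s := by
    intro s hs; rw [hgdef]; simp only []; linarith [hθtbar s hs]
  have hgzero : g 0 = a := by rw [hgdef, hadef]; simp [hθt0]
  -- the key representation: v s - p = θt s • (v₀ - p) on [0,∞)
  have hrep : ∀ s ∈ Ici (0:ℝ), v s - p = θt s • (v₀ - p) := by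
    intro b hb
    set u : ℝ → X := fun t => Real.exp (F t) • (v t - p) with hudef
    have hu' : ∀ t ∈ Ici (0:ℝ), HasDerivWithinAt u 0 (Ici 0) t := by
      intro t ht
      have hevt : HasDerivAt (fun s => Real.exp (F s)) (Real.exp (F t) * q t) t :=
        (hF' t).exp
      have hvt : HasDerivWithinAt (fun s => v s - p) ((-(q t)) • (v t - p)) (Ici 0) t := by
        have h1 := (hv' t ht).sub_const p
        have h2 : h (v t) = h (w t) := by rw [hweq t ht]
        rw [hqdef]
        simpa [h2] using h1
      have hsmul := hevt.hasDerivWithinAt.smul hvt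
      have h0 : (Real.exp (F t)) • ((-(q t)) • (v t - p))
          + (Real.exp (F t) * q t) • (v t - p) = 0 := by
        module
      rw [hudef]
      exact h0 ▸ hsmul
    have hucont : ContinuousOn u (Icc 0 b) := fun x hx =>
      ((hu' x hx.1).continuousWithinAt).mono Icc_subset_Ici_self
    have huconst : u b = u 0 := by
      refine constant_of_has_deriv_right_zero hucont (fun x hx => ?_) b
        (mem_Icc.mpr ⟨mem_Ici.mp hb, le_refl b⟩)
      exact (hu' x hx.1).mono (Ici_subset_Ici.mpr hx.1)
    have hu0 : u 0 = v₀ - p := by rw [hudef]; simp [hF0, hv0]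
    have hub : Real.exp (F b) • (v b - p) = v₀ - p := by rw [← hu0, ← huconst, hudef]
    have := congrArg (fun z => Real.exp (-(F b)) • z) hub
    simpa [smul_smul, ← Real.exp_add, hθtdef] using this
  -- vbar - p = θbar • (v₀ - p)
  have hvbarp : vbar - p = θbar • (v₀ - p) := by
    rw [hvbar]; module
  -- v s - vbar = g s • (v₀ - p)
  have hdiff : ∀ s ∈ Ici (0:ℝ), v s - vbar = g s • (v₀ - p) := by
    intro s hs
    have : v s - vbar = (v s - p) - (vbar - p) := by abel
    rw [this, hrep s hs, hvbarp, hgdef, sub_smul]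
  have hnorm : ∀ s ∈ Ici (0:ℝ), ‖v s - vbar‖ = g s * N := by
    intro s hs
    rw [hdiff s hs, norm_smul, Real.norm_eq_abs, abs_of_nonneg (hg0 s hs), hNdef]
  -- bound on q
  have hqbound : ∀ s ∈ Ici (0:ℝ), q s ≤ K * g s ^ 2 := by
    intro s hs
    have h1 : h (v s) ≤ c * (g s * N) := by
      have := hlip (v s) vbar
      rw [hzero, sub_zero, hnorm s hs] at this
      exact le_trans (le_abs_self _) this
    have h2 : 0 ≤ h (v s) := hpos _
    have h3 : q s = h (v s) ^ 2 := by rw [hqdef]; simp [hweq s hs]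
    rw [h3, hKdef]
    nlinarith [hg0 s hs, hN0]
  -- Gronwall-type comparison via an energy function
  set G : ℝ → ℝ := fun t => ∫ σ in (0:ℝ)..t, K * g σ with hGdef
  have hG' : ∀ t, HasDerivAt G (K * g t) t := fun t =>
    ((continuous_const.mul hgc).integral_hasStrictDerivAt 0 t).hasDerivAt
  have hG0 : G 0 = 0 := intervalIntegral.integral_same
  set ψ : ℝ → ℝ := fun t => a - g t * (1 + a * K * t) with hψdef
  set ψ' : ℝ → ℝ := fun t => -((-(q t) * θt t) * (1 + a * K * t) + g t * (a * K)) with hψ'def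
  have hψ' : ∀ t, HasDerivAt ψ (ψ' t) t := by
    intro t
    have hlin : HasDerivAt (fun t : ℝ => 1 + a * K * t) (a * K) t := by
      simpa using ((hasDerivAt_id t).const_mul (a * K)).const_add 1
    exact ((hg' t).mul hlin).const_sub a
  set E : ℝ → ℝ := fun t => ψ t * Real.exp (G t) with hEdef
  set E' : ℝ → ℝ := fun t => ψ' t * Real.exp (G t) + ψ t * (Real.exp (G t) * (K * g t))
    with hE'def
  have hE' : ∀ t, HasDerivAt E (E' t) t := fun t => (hψ' t).mul ((hG' t).exp)
  have hE'nonpos : ∀ t ∈ Ici (0:ℝ), E' t ≤ 0 := by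
    intro t ht
    have h1 : q t * θt t ≤ K * g t ^ 2 := by
      have := hqbound t ht
      nlinarith [mul_nonneg (hq0 t) (sub_nonneg.mpr (hθtle1 t ht))]
    have h2 : (0:ℝ) ≤ 1 + a * K * t := by
      have := mul_nonneg (mul_nonneg ha0 hK0) (mem_Ici.mp ht)
      linarith
    have h3 : E' t = Real.exp (G t) * ((q t * θt t - K * g t ^ 2) * (1 + a * K * t)) := by
      rw [hE'def, hψ'def, hψdef]; ring
    rw [h3]
    have h4 : (q t * θt t - K * g t ^ 2) * (1 + a * K * t) ≤ 0 :=
      mul_nonpos_of_nonpos_of_nonneg (by linarith) h2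
    nlinarith [Real.exp_pos (G t)]
  have hE0 : E 0 = 0 := by
    rw [hEdef, hψdef]; simp [hG0, hgzero]
  have hEτ : E τ ≤ 0 := by
    have := image_le_of_deriv_right_le_deriv_boundary (f := E) (f' := E') (a := 0) (b := τ)
      (Continuous.continuousOn (continuous_iff_continuousAt.2 fun t => (hE' t).continuousAt))
      (fun x hx => (hE' x).hasDerivWithinAt)
      (B := fun _ => 0) (B' := fun _ => 0) (le_of_eq hE0)
      continuousOn_const
      (fun x _ => (hasDerivWithinAt_const _ _ 0))
      (fun x hx => hE'nonpos x hx.1)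
    exact this (mem_Icc.mpr ⟨hτ0, le_refl τ⟩)
  have hψτ : ψ τ ≤ 0 := by
    have hEτ' : ψ τ * Real.exp (G τ) ≤ 0 := hEτ
    nlinarith [Real.exp_pos (G τ)]
  -- conclude
  have hgτ : a ≤ g τ * (1 + K * τ) := by
    have hψτ' : a - g τ * (1 + a * K * τ) ≤ 0 := hψτ
    have hgτ0 := hg0 τ hτ
    nlinarith [mul_nonneg (mul_nonneg (mul_nonneg hgτ0 hK0) hτ0) (sub_nonneg.mpr ha1)]
  have hden : (0:ℝ) < 1 + K * τ := by nlinarith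
  rw [hnorm τ hτ, div_le_iff₀ hden]
  nlinarith [mul_le_mul_of_nonneg_right hgτ hN0]
end

section
/- Let h : X → [0,∞) be Lipschitz with constant c and h(p) = 0, and let v : [0,∞) → X be continuously differentiable with v(0) = v₀ and v′(τ) = −h(v(τ))·(v(τ) − p) for all τ ≥ 0. Then with θ̃(τ) = exp(−∫₀^τ h(v(σ)) dσ) one has v(τ) = θ̃(τ)·v₀ + (1 − θ̃(τ))·p, θ̃(τ) ≥ 1/(1 + c·‖v₀ − p‖·τ), and hence ‖v(τ) − p‖ ≥ ‖v₀ − p‖/(1 + c·‖v₀ − p‖·τ) for all τ ≥ 0. -/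
open Set Filter Topology MeasureTheory intervalIntegral

/-- For the modified determining form `dv/dτ = -h(v)·(v - p)` with `h : X → [0,∞)`
Lipschitz with constant `c` and `h(p) = 0`: with
`θ̃(τ) = exp(-∫₀^τ h(v(σ)) dσ)` one has `v(τ) = θ̃(τ)·v₀ + (1-θ̃(τ))·p`,
`θ̃(τ) ≥ 1/(1 + c‖v₀ - p‖τ)`, and hence
`‖v(τ) - p‖ ≥ ‖v₀ - p‖/(1 + c‖v₀ - p‖τ)` for all `τ ≥ 0`. -/
theorem modified_determining_form_rate
    {X : Type*} [NormedAddCommGroup X] [NormedSpace ℝ X] [CompleteSpace X]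
    (p v₀ : X) (c : ℝ) (hc : 0 ≤ c) (h : X → ℝ)
    (hpos : ∀ x, 0 ≤ h x)
    (hlip : ∀ x y : X, |h x - h y| ≤ c * ‖x - y‖)
    (hp : h p = 0)
    (v : ℝ → X) (hv0 : v 0 = v₀)
    (hv' : ∀ τ ∈ Set.Ici (0:ℝ),
      HasDerivWithinAt v ((-(h (v τ))) • (v τ - p)) (Set.Ici 0) τ)
    (θ : ℝ → ℝ)
    (hθ : ∀ τ, θ τ = Real.exp (-(∫ σ in (0:ℝ)..τ, h (v σ)))) :
    ∀ τ ∈ Set.Ici (0:ℝ),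
      v τ = θ τ • v₀ + (1 - θ τ) • p ∧
      1 / (1 + c * ‖v₀ - p‖ * τ) ≤ θ τ ∧
      ‖v₀ - p‖ / (1 + c * ‖v₀ - p‖ * τ) ≤ ‖v τ - p‖ := by
  set g : ℝ → ℝ := fun τ => ∫ σ in (0:ℝ)..τ, h (v σ) with hg
  set E : ℝ → ℝ := fun τ => Real.exp (g τ) with hE
  have hvcont : ContinuousOn v (Ici 0) := fun τ hτ => (hv' τ hτ).continuousWithinAt
  have hhc : ContinuousOn (fun σ => h (v σ)) (Ici 0) := by
    have hlipH : LipschitzWith (Real.toNNReal c) h := by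
      apply LipschitzWith.of_dist_le_mul
      intro x y
      rw [Real.dist_eq]
      calc |h x - h y| ≤ c * ‖x - y‖ := hlip x y
        _ = c * dist x y := by rw [dist_eq_norm]
        _ ≤ (Real.toNNReal c : ℝ) * dist x y := by
            gcongr; exact Real.le_coe_toNNReal c
    exact hlipH.continuous.comp_continuousOn hvcont
  have hInt : ∀ τ ∈ Ici (0:ℝ), IntervalIntegrable (fun σ => h (v σ)) volume 0 τ := by
    intro τ hτ
    apply ContinuousOn.intervalIntegrable
    apply hhc.mono
    rw [uIcc_of_le hτ]
    exact Icc_subset_Ici_self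
  have hEcont : ∀ τ ∈ Ici (0:ℝ), ContinuousOn E (Icc 0 τ) := by
    intro τ hτ
    apply Real.continuous_exp.comp_continuousOn
    have := intervalIntegral.continuousOn_primitive_interval' (hInt τ hτ)
      (by rw [uIcc_of_le hτ]; exact left_mem_Icc.mpr hτ)
    rwa [uIcc_of_le hτ] at this
  -- derivative of g within Ici x at x, for x ≥ 0
  have hg' : ∀ x ∈ Ici (0:ℝ), HasDerivWithinAt g (h (v x)) (Ici x) x := by
    intro x hx
    have hmeas : StronglyMeasurableAtFilter (fun σ => h (v σ)) (𝓝[>] x) volume :=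
      ⟨Ici 0, mem_of_superset self_mem_nhdsWithin
        (fun y hy => show (0:ℝ) ≤ y from le_trans hx (le_of_lt hy)),
        hhc.aestronglyMeasurable measurableSet_Ici⟩
    exact intervalIntegral.integral_hasDerivWithinAt_right (hInt x hx) hmeas
      ((hhc x hx).mono (fun y hy => show (0:ℝ) ≤ y from le_trans hx (le_of_lt hy)))
  have hE' : ∀ x ∈ Ici (0:ℝ),
      HasDerivWithinAt E (E x * h (v x)) (Ici x) x := fun x hx => (hg' x hx).exp
  have hEpos : ∀ x, 0 < E x := fun x => Real.exp_pos _
  have hg0 : g 0 = 0 := intervalIntegral.integral_same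
  have hE0 : E 0 = 1 := by rw [hE]; simp [hg0]
  have hθE : ∀ x, θ x = (E x)⁻¹ := by
    intro x
    rw [hθ x, hE, ← Real.exp_neg]
  have hθpos : ∀ x, 0 < θ x := fun x => by rw [hθE]; positivity
  -- key: v τ - p = θ τ • (v₀ - p) for all τ ≥ 0
  have key : ∀ τ ∈ Ici (0:ℝ), v τ - p = θ τ • (v₀ - p) := by
    intro τ hτ
    have hw : ∀ x ∈ Icc (0:ℝ) τ,
        E x • (v x - p) = E 0 • (v 0 - p) := by
      apply constant_of_has_deriv_right_zero
      · exact (hEcont τ hτ).smul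
          ((hvcont.mono Icc_subset_Ici_self).sub continuousOn_const)
      · intro x hx
        have hx0 : x ∈ Ici (0:ℝ) := hx.1
        have hder := (hE' x hx0).smul
          (((hv' x hx0).mono (Ici_subset_Ici.mpr hx.1)).sub
            (hasDerivWithinAt_const x _ p))
        convert hder using 1
        · rfl
        simp only [sub_zero, Pi.sub_apply]
        rw [smul_smul, ← add_smul]
        have : E x * -h (v x) + E x * h (v x) = 0 := by ring
        rw [this, zero_smul]
    have := hw τ ⟨hτ, le_refl τ⟩
    rw [hv0, hE0, one_smul] at this
    rw [hθE]
    calc v τ - p = (E τ)⁻¹ • (E τ • (v τ - p)) := by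
          rw [smul_smul, inv_mul_cancel₀ (ne_of_gt (hEpos τ)), one_smul]
      _ = (E τ)⁻¹ • (v₀ - p) := by rw [this]
  -- bound on E
  have hEbound : ∀ τ ∈ Ici (0:ℝ), E τ ≤ 1 + c * ‖v₀ - p‖ * τ := by
    intro τ hτ
    have hb := norm_image_sub_le_of_norm_deriv_right_le_segment (hEcont τ hτ)
      (fun x hx => hE' x hx.1)
      (fun x hx => by
        have hx0 : x ∈ Ici (0:ℝ) := hx.1
        have h1 : h (v x) ≤ c * ‖v x - p‖ := by
          have := hlip (v x) p
          rw [hp, sub_zero] at this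
          exact le_trans (le_abs_self _) this
        have h2 : ‖v x - p‖ = θ x * ‖v₀ - p‖ := by
          rw [key x hx0, norm_smul, Real.norm_eq_abs,
            abs_of_pos (hθpos x)]
        have h3 : E x * θ x = 1 := by
          rw [hθE]; field_simp; exact div_self (ne_of_gt (hEpos x))
        rw [Real.norm_eq_abs, abs_of_nonneg
          (mul_nonneg (le_of_lt (hEpos x)) (hpos _))]
        calc E x * h (v x) ≤ E x * (c * (θ x * ‖v₀ - p‖)) := by
              rw [← h2]
              exact mul_le_mul_of_nonneg_left h1 (le_of_lt (hEpos x))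
          _ = c * ‖v₀ - p‖ * (E x * θ x) := by ring
          _ = c * ‖v₀ - p‖ := by rw [h3, mul_one])
      τ ⟨hτ, le_refl τ⟩
    rw [hE0, Real.norm_eq_abs, sub_zero] at hb
    have := le_trans (le_abs_self _) hb
    linarith
  intro τ hτ
  have hτ0 : (0:ℝ) ≤ τ := hτ
  have hden : 0 < 1 + c * ‖v₀ - p‖ * τ := by
    have : 0 ≤ c * ‖v₀ - p‖ * τ := by positivity
    linarith
  have hkey := key τ hτ
  have hθge : 1 / (1 + c * ‖v₀ - p‖ * τ) ≤ θ τ := by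
    rw [hθE, one_div]
    exact inv_anti₀ (hEpos τ) (hEbound τ hτ)
  refine ⟨?_, hθge, ?_⟩
  · have hv : v τ = θ τ • (v₀ - p) + p := by rw [← hkey]; abel
    rw [hv, smul_sub]
    have : (1 - θ τ) • p = p - θ τ • p := by rw [sub_smul, one_smul]
    rw [this]; abel
  · rw [hkey, norm_smul, Real.norm_eq_abs, abs_of_pos (hθpos τ)]
    calc ‖v₀ - p‖ / (1 + c * ‖v₀ - p‖ * τ) = (1 / (1 + c * ‖v₀ - p‖ * τ)) * ‖v₀ - p‖ := by
          ring
      _ ≤ θ τ * ‖v₀ - p‖ := mul_le_mul_of_nonneg_right hθge (norm_nonneg _)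
end

section
/- Let h : X → [0,∞) be Lipschitz with constant c, let η̄ ∈ [0,1] satisfy h(η̄·v₀ + (1 − η̄)·p) = 0, and let η : [0,∞) → ℝ be differentiable with η(0) = 1, η̄ ≤ η(τ) ≤ 1 for all τ ≥ 0, and η′(τ) = −h(η(τ)·v₀ + (1 − η(τ))·p) for all τ ≥ 0. Then η(τ) − η̄ ≥ (1 − η̄)·exp(−c·‖v₀ − p‖·τ) for all τ ≥ 0. -/
open Set Filter Topology

/-- For the accelerated parametric ODE `dη/dτ = -h(η·v₀ + (1-η)·p)` with
`h : X → [0,∞)` Lipschitz with constant `c` vanishing at `η̄·v₀ + (1-η̄)·p`,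
`η(0) = 1` and `η̄ ≤ η(τ) ≤ 1`: one has the exponential lower bound
`η(τ) - η̄ ≥ (1 - η̄)·exp(-c‖v₀ - p‖τ)` for all `τ ≥ 0`. -/
theorem accelerated_exponential_rate
    {X : Type*} [NormedAddCommGroup X] [NormedSpace ℝ X] [CompleteSpace X]
    (p v₀ : X) (c : ℝ) (hc : 0 ≤ c) (h : X → ℝ)
    (hpos : ∀ x, 0 ≤ h x)
    (hlip : ∀ x y : X, |h x - h y| ≤ c * ‖x - y‖)
    (ηbar : ℝ) (hηbar : ηbar ∈ Set.Icc (0:ℝ) 1)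
    (hzero : h (ηbar • v₀ + (1 - ηbar) • p) = 0)
    (η : ℝ → ℝ) (hη0 : η 0 = 1)
    (hmem : ∀ τ ∈ Set.Ici (0:ℝ), ηbar ≤ η τ ∧ η τ ≤ 1)
    (hderiv : ∀ τ ∈ Set.Ici (0:ℝ),
      HasDerivWithinAt η (-(h (η τ • v₀ + (1 - η τ) • p))) (Set.Ici 0) τ) :
    ∀ τ ∈ Set.Ici (0:ℝ),
      (1 - ηbar) * Real.exp (-(c * ‖v₀ - p‖ * τ)) ≤ η τ - ηbar := by
  set K := c * ‖v₀ - p‖ with hK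
  have hK0 : 0 ≤ K := mul_nonneg hc (norm_nonneg _)
  set g : ℝ → ℝ := fun τ => (η τ - ηbar) * Real.exp (K * τ) with hg
  -- key bound: h(η τ • v₀ + (1 - η τ) • p) ≤ K * (η τ - ηbar) for τ ≥ 0
  have key : ∀ τ ∈ Set.Ici (0:ℝ),
      h (η τ • v₀ + (1 - η τ) • p) ≤ K * (η τ - ηbar) := by
    intro τ hτ
    have hle := (hmem τ hτ).1
    have := hlip (η τ • v₀ + (1 - η τ) • p) (ηbar • v₀ + (1 - ηbar) • p)
    rw [hzero, sub_zero, abs_of_nonneg (hpos _)] at this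
    have hdiff : (η τ • v₀ + (1 - η τ) • p) - (ηbar • v₀ + (1 - ηbar) • p)
        = (η τ - ηbar) • (v₀ - p) := by module
    rw [hdiff, norm_smul, Real.norm_eq_abs, abs_of_nonneg (by linarith)] at this
    calc h (η τ • v₀ + (1 - η τ) • p) ≤ c * (|η τ - ηbar| * ‖v₀ - p‖) := by
          rw [abs_of_nonneg (by linarith)]; exact this
      _ = K * (η τ - ηbar) := by rw [abs_of_nonneg (by linarith)]; ring
  -- g is monotone on Ici 0
  have hgderiv : ∀ τ ∈ Set.Ici (0:ℝ),
      HasDerivWithinAt g ((-(h (η τ • v₀ + (1 - η τ) • p)) + (η τ - ηbar) * K)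
        * Real.exp (K * τ)) (Set.Ici 0) τ := by
    intro τ hτ
    have h1 : HasDerivWithinAt (fun τ => η τ - ηbar)
        (-(h (η τ • v₀ + (1 - η τ) • p))) (Set.Ici 0) τ :=
      (hderiv τ hτ).sub_const _
    have h2 : HasDerivWithinAt (fun τ => Real.exp (K * τ))
        (Real.exp (K * τ) * K) (Set.Ici 0) τ :=
      by simpa using (((hasDerivAt_id τ).const_mul K).exp).hasDerivWithinAt
    have := h1.mul h2
    exact this.congr_deriv (by ring)
  have hmono : MonotoneOn g (Set.Ici 0) := by
    apply monotoneOn_of_deriv_nonneg (convex_Ici 0)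
    · exact fun τ hτ => ((hgderiv τ hτ).continuousWithinAt)
    · intro τ hτ
      rw [interior_Ici] at hτ
      exact (((hgderiv τ (Set.mem_Ici.mpr (le_of_lt hτ))).hasDerivAt
        (Ici_mem_nhds hτ)).differentiableAt).differentiableWithinAt
    · intro τ hτ
      rw [interior_Ici] at hτ
      have hτ' : τ ∈ Set.Ici (0:ℝ) := Set.mem_Ici.mpr (le_of_lt hτ)
      have hd := (hgderiv τ hτ').hasDerivAt (Ici_mem_nhds hτ)
      rw [hd.deriv]
      have hb := key τ hτ'
      have : 0 ≤ -(h (η τ • v₀ + (1 - η τ) • p)) + (η τ - ηbar) * K := by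
        nlinarith
      exact mul_nonneg this (Real.exp_pos _).le
  intro τ hτ
  have := hmono (Set.self_mem_Ici) hτ hτ
  have hg0 : g 0 = 1 - ηbar := by simp [hg, hη0]
  have hgτ : g τ = (η τ - ηbar) * Real.exp (K * τ) := rfl
  rw [hg0, hgτ] at this
  show (1 - ηbar) * Real.exp (-(K * τ)) ≤ η τ - ηbar
  rw [Real.exp_neg]
  have hep := (Real.exp_pos (K * τ))
  calc (1 - ηbar) * (Real.exp (K * τ))⁻¹
      ≤ ((η τ - ηbar) * Real.exp (K * τ)) * (Real.exp (K * τ))⁻¹ :=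
        mul_le_mul_of_nonneg_right this (by positivity)
    _ = η τ - ηbar := by field_simp
end

section
/- Let E be a real Banach space, p ∈ E, let v₀ : ℝ → E be bounded, and suppose there exists a nonincreasing function θ : [0,∞) → (0,1] with θ(0) = 1 such that v₀(s + τ) = θ(τ)·v₀(s) + (1 − θ(τ))·p for all s ∈ ℝ and all τ ≥ 0. Then v₀ is constant. -/
/-- No traveling waves: if a bounded function `v₀ : ℝ → E` satisfies
`v₀(s + τ) = θ(τ)·v₀(s) + (1 - θ(τ))·p` for all `s ∈ ℝ`, `τ ≥ 0`, for some
nonincreasing `θ : [0,∞) → (0,1]` with `θ(0) = 1`, then `v₀` is constant. -/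
theorem no_traveling_waves
    {E : Type*} [NormedAddCommGroup E] [NormedSpace ℝ E] [CompleteSpace E]
    (p : E) (v₀ : ℝ → E)
    (hbdd : ∃ M : ℝ, ∀ s : ℝ, ‖v₀ s‖ ≤ M)
    (θ : ℝ → ℝ) (hθ0 : θ 0 = 1)
    (hmem : ∀ τ ∈ Set.Ici (0:ℝ), θ τ ∈ Set.Ioc (0:ℝ) 1)
    (hmono : AntitoneOn θ (Set.Ici 0))
    (hconv : ∀ s : ℝ, ∀ τ ∈ Set.Ici (0:ℝ),
      v₀ (s + τ) = θ τ • v₀ s + (1 - θ τ) • p) :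
    ∀ s t : ℝ, v₀ s = v₀ t := by
  obtain ⟨M, hM⟩ := hbdd
  set w : ℝ → E := fun s => v₀ s - p with hw
  have hkey : ∀ s : ℝ, ∀ τ ∈ Set.Ici (0:ℝ), w (s + τ) = θ τ • w s := by
    intro s τ hτ
    simp only [hw]
    rw [hconv s τ hτ]
    rw [smul_sub, sub_smul, one_smul]
    abel
  set C : ℝ := M + ‖p‖ with hC
  have hwC : ∀ s, ‖w s‖ ≤ C := by
    intro s
    calc ‖w s‖ ≤ ‖v₀ s‖ + ‖p‖ := norm_sub_le _ _
    _ ≤ M + ‖p‖ := by linarith [hM s]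
  -- claim: θ τ = 1 for all τ ≥ 0, unless w ≡ 0
  by_cases hz : ∀ s : ℝ, w s = 0
  · intro s t
    have hs := hz s; have ht := hz t
    have : v₀ s = p := by simpa [hw, sub_eq_zero] using hs
    have : v₀ t = p := by simpa [hw, sub_eq_zero] using ht
    simp_all
  · push_neg at hz
    obtain ⟨s₀, hs₀⟩ := hz
    have hθ1 : ∀ τ ∈ Set.Ici (0:ℝ), θ τ = 1 := by
      intro τ hτ
      by_contra hne
      have hlt : θ τ < 1 := lt_of_le_of_ne (hmem τ hτ).2 hne
      have hpos : 0 < θ τ := (hmem τ hτ).1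
      have hiter : ∀ n : ℕ, ∀ s : ℝ, ‖w s‖ ≤ (θ τ) ^ n * C := by
        intro n
        induction n with
        | zero => intro s; simpa using hwC s
        | succ n ih =>
          intro s
          have h1 : w s = θ τ • w (s - τ) := by
            have := hkey (s - τ) τ hτ
            simpa [sub_add_cancel] using this
          rw [h1, norm_smul, Real.norm_eq_abs, abs_of_pos hpos]
          calc θ τ * ‖w (s - τ)‖ ≤ θ τ * ((θ τ) ^ n * C) := by
                exact mul_le_mul_of_nonneg_left (ih (s - τ)) hpos.le
          _ = (θ τ) ^ (n + 1) * C := by ring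
      have htend : Filter.Tendsto (fun n : ℕ => (θ τ) ^ n * C) Filter.atTop (nhds 0) := by
        have := tendsto_pow_atTop_nhds_zero_of_lt_one hpos.le hlt
        simpa using this.mul_const C
      have hle : ‖w s₀‖ ≤ 0 :=
        le_of_tendsto_of_tendsto' tendsto_const_nhds htend (fun n => hiter n s₀)
      exact hs₀ (norm_le_zero_iff.mp hle)
    have hperiod : ∀ s : ℝ, ∀ τ ∈ Set.Ici (0:ℝ), v₀ (s + τ) = v₀ s := by
      intro s τ hτ
      rw [hconv s τ hτ, hθ1 τ hτ]
      simp
    have hmain : ∀ s t : ℝ, s ≤ t → v₀ s = v₀ t := by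
      intro s t hst
      have : t = s + (t - s) := by ring
      rw [this, hperiod s (t - s) (by simp [sub_nonneg.mpr hst])]
    intro s t
    rcases le_total s t with h | h
    · exact hmain s t h
    · exact (hmain t s h).symm
end
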